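/- arXiv:2512.06704 — 2 statements merged into one kernel-verified Lean document; each statement's English description precedes it below -/
import Mathlib

section
/- If the master-formula λ-bracket satisfies the PVA-Jacobi identity for every triple of generators (u^i, u^j, u^k), then it satisfies the PVA-Jacobi identity for every triple of shifted generators (u^i_M, u^j_N, u^k_P) with arbitrary M, N, P ∈ ℤ^D (where u^i_M denotes the variable indexed by (i, M), viewed as an element of A). -/
open MvPolynomial

namespace MPVA

/-- The algebra of difference polynomials in `ℓ` generators on a `D`-dimensional lattice:
polynomials over `ℂ` in the variables `u^i_N`, `i ∈ Fin ℓ`, `N ∈ ℤ^D`. -/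
abbrev A (ℓ D : ℕ) := MvPolynomial (Fin ℓ × (Fin D → ℤ)) ℂ

variable {ℓ D : ℕ}

/-- The shift automorphism `S^M` sending `u^i_N` to `u^i_{N+M}`. -/
noncomputable def Sh (M : Fin D → ℤ) : A ℓ D ≃ₐ[ℂ] A ℓ D :=
  renameEquiv ℂ ((Equiv.refl (Fin ℓ)).prodCongr (Equiv.addRight M))

/-- The `α`-th standard basis vector `E_α ∈ ℤ^D`. -/
def E (α : Fin D) : Fin D → ℤ := fun β => if β = α then 1 else 0

/-- Coefficient `B_T(f,g)` of `λ^T` in the master-formula λ-bracket `{f_λ g}` determined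
by the generator coefficients `{u^i_λ u^j} = Σ_T (P j i T)·λ^T`:
`{f_λ g} = Σ_{i,j,M,N,T'} (∂g/∂u^j_N)·S^N(P^{ji}_{T'})·S^{N+T'−M}(∂f/∂u^i_M)·λ^{N+T'−M}`. -/
noncomputable def B (P : Fin ℓ → Fin ℓ → (Fin D → ℤ) → A ℓ D)
    (T : Fin D → ℤ) (f g : A ℓ D) : A ℓ D :=
  ∑ᶠ (i : Fin ℓ) (j : Fin ℓ) (M : Fin D → ℤ) (N : Fin D → ℤ),
    (pderiv (j, N) g) * (Sh N (P j i (T - N + M))) * (Sh T (pderiv (i, M) f))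

/-- The family of generator coefficients has only finitely many nonzero members. -/
def FinSupp (P : Fin ℓ → Fin ℓ → (Fin D → ℤ) → A ℓ D) : Prop :=
  {x : (Fin ℓ × Fin ℓ) × (Fin D → ℤ) | P x.1.1 x.1.2 x.2 ≠ 0}.Finite

/-- The PVA-Jacobi identity for the triple `(f,g,h)`, written coefficient-wise
(for all `T, U ∈ ℤ^D`, the coefficient of `λ^T μ^U` in
`Σ_U {f_λ B_U(g,h)}μ^U − Σ_T {g_μ B_T(f,h)}λ^T = Σ_{T,U} B_U(B_T(f,g),h)λ^{T+U}μ^U`). -/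
def Jacobi (P : Fin ℓ → Fin ℓ → (Fin D → ℤ) → A ℓ D) (f g h : A ℓ D) : Prop :=
  ∀ T U : Fin D → ℤ,
    B P T f (B P U g h) - B P U g (B P T f h) = B P U (B P (T - U) f g) h


lemma Sh_Sh (K T : Fin D → ℤ) (p : A ℓ D) : Sh T (Sh K p) = Sh (K + T) p := by
  simp only [Sh, renameEquiv_apply, rename_rename]
  have : (⇑((Equiv.refl (Fin ℓ)).prodCongr (Equiv.addRight T)) ∘
      ⇑((Equiv.refl (Fin ℓ)).prodCongr (Equiv.addRight K)))
      = ⇑((Equiv.refl (Fin ℓ)).prodCongr (Equiv.addRight (K + T))) := by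
    funext x; cases x; simp [add_assoc]
  rw [this]

lemma Sh_X (M : Fin D → ℤ) (i : Fin ℓ) (N : Fin D → ℤ) :
    Sh M (X (i, N) : A ℓ D) = X (i, N + M) := by
  simp [Sh]

lemma pderiv_Sh (K : Fin D → ℤ) (i : Fin ℓ) (M : Fin D → ℤ) (f : A ℓ D) :
    pderiv (i, M) (Sh K f) = Sh K (pderiv (i, M - K) f) := by
  have h := pderiv_rename (f := ((Equiv.refl (Fin ℓ)).prodCongr (Equiv.addRight K) : _ ≃ _))
    (Equiv.injective _) (i, M - K) f
  simpa [Sh, sub_add_cancel] using h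

lemma Sh_finsum {α : Sort*} (K : Fin D → ℤ) (f : α → A ℓ D) :
    Sh K (∑ᶠ x, f x) = ∑ᶠ x, Sh K (f x) :=
  (Sh K).toRingEquiv.toAddEquiv.map_finsum f

lemma B_sh_left (P : Fin ℓ → Fin ℓ → (Fin D → ℤ) → A ℓ D) (T K : Fin D → ℤ)
    (f g : A ℓ D) : B P T (Sh K f) g = B P (T + K) f g := by
  unfold B
  refine finsum_congr fun i => finsum_congr fun j => ?_
  rw [← finsum_comp (g := fun M => ∑ᶠ N, (pderiv (j, N) g) *
      (Sh N (P j i (T - N + M))) * (Sh T (pderiv (i, M) (Sh K f))))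
      (fun M => M + K) (Equiv.addRight K).bijective]
  refine finsum_congr fun M => finsum_congr fun N => ?_
  rw [pderiv_Sh, add_sub_cancel_right, Sh_Sh]
  have h1 : T - N + (M + K) = T + K - N + M := by abel
  have h2 : K + T = T + K := by abel
  rw [h1, h2]

lemma B_sh_right (P : Fin ℓ → Fin ℓ → (Fin D → ℤ) → A ℓ D) (T K : Fin D → ℤ)
    (f g : A ℓ D) : B P T f (Sh K g) = Sh K (B P (T - K) f g) := by
  unfold B
  rw [Sh_finsum]
  refine finsum_congr fun i => ?_
  rw [Sh_finsum]
  refine finsum_congr fun j => ?_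
  rw [Sh_finsum]
  refine finsum_congr fun M => ?_
  rw [Sh_finsum]
  rw [← finsum_comp (g := fun N => (pderiv (j, N) (Sh K g)) *
      (Sh N (P j i (T - N + M))) * (Sh T (pderiv (i, M) f)))
      (fun N => N + K) (Equiv.addRight K).bijective]
  refine finsum_congr fun N => ?_
  rw [pderiv_Sh, add_sub_cancel_right, map_mul, map_mul, Sh_Sh, Sh_Sh]
  have h1 : T - (N + K) + M = T - K - N + M := by abel
  have h2 : T - K + K = T := by abel
  rw [h1, h2]

/-- if the PVA-Jacobi identity holds for all triples of generators
`(u^i, u^j, u^k)`, then it holds for all triples of shifted generators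
`(u^i_M, u^j_N, u^k_P)`. -/
theorem jacobi_shifted_generators (ℓ D : ℕ) (P : Fin ℓ → Fin ℓ → (Fin D → ℤ) → A ℓ D)
    (hP : FinSupp P)
    (hgen : ∀ i j k : Fin ℓ,
      Jacobi P (X (i, (0 : Fin D → ℤ))) (X (j, (0 : Fin D → ℤ))) (X (k, (0 : Fin D → ℤ)))) :
    ∀ (i j k : Fin ℓ) (M N Q : Fin D → ℤ),
      Jacobi P (X (i, M)) (X (j, N)) (X (k, Q)) := by
  intro i j k M N Q T U
  have hX : ∀ (a : Fin ℓ) (W : Fin D → ℤ), (X (a, W) : A ℓ D) = Sh W (X (a, 0)) := by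
    intro a W; rw [Sh_X, zero_add]
  rw [hX i M, hX j N, hX k Q]
  simp only [B_sh_left, B_sh_right, ← map_sub]
  congr 1
  have e1 : U - Q + N = U + N - Q := by abel
  have e2 : T - Q + M = T + M - Q := by abel
  rw [e1, e2]
  have e3 : T - U - N + M = T + M - Q - (U + N - Q) := by abel
  rw [e3]
  exact hgen i j k (T + M - Q) (U + N - Q)

end MPVA
end

section
/- Let F₁₁, F₁₂, F₂₂, G₁, G₂ ∈ A all be nonzero, and consider the master-formula λ-bracket of the scalar two-dimensional operator of order (−2,2), i.e. with generator coefficients P_{(2,0)} = F₁₁, P_{(1,1)} = F₁₂, P_{(0,2)} = F₂₂, P_{(1,0)} = G₁, P_{(0,1)} = G₂, with P_{−L} = −S^{−L}(P_L) for L ∈ {(2,0),(1,1),(0,2),(1,0),(0,1)}, and P_T = 0 for all other T ∈ ℤ². If this λ-bracket satisfies the PVA-Jacobi identity for the triple (u, u, u), then F₁₁ depends only on u, u_{10}, u_{20}; F₁₂ depends only on u, u_{10}, u_{01}, u_{11}; F₂₂ depends only on u, u_{01}, u_{02}; G₁ depends only on u, u_{10}; and G₂ depends only on u, u_{01}. 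-/
open MvPolynomial

namespace MPVA

variable {ℓ D : ℕ}

/-- For `D = 2`: the lattice point `(m,n) ∈ ℤ²`. -/
def v (m n : ℤ) : Fin 2 → ℤ := ![m, n]

/-- For `D = 2`, `ℓ = 1`: the variable `u_{mn}` of the scalar two-dimensional algebra. -/
noncomputable def uu (m n : ℤ) : A 1 2 := X ((0 : Fin 1), v m n)

/-- Generator coefficients of the scalar two-dimensional operator of order `(−2,2)`:
`P_{(2,0)} = F₁₁`, `P_{(1,1)} = F₁₂`, `P_{(0,2)} = F₂₂`, `P_{(1,0)} = G₁`,
`P_{(0,1)} = G₂`, with `P_{−L} = −S^{−L}(P_L)` and all other coefficients zero. -/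
noncomputable def P2 (F11 F12 F22 G1 G2 : A 1 2) :
    Fin 1 → Fin 1 → (Fin 2 → ℤ) → A 1 2 :=
  fun _ _ T =>
    if T = v 2 0 then F11
    else if T = v 1 1 then F12
    else if T = v 0 2 then F22
    else if T = v 1 0 then G1
    else if T = v 0 1 then G2
    else if T = v (-2) 0 then -(Sh (v (-2) 0) F11)
    else if T = v (-1) (-1) then -(Sh (v (-1) (-1)) F12)
    else if T = v 0 (-2) then -(Sh (v 0 (-2)) F22)
    else if T = v (-1) 0 then -(Sh (v (-1) 0) G1)
    else if T = v 0 (-1) then -(Sh (v 0 (-1)) G2)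
    else 0

/-! ### Auxiliary lemmas -/

lemma v00 : v 0 0 = 0 := by funext i; fin_cases i <;> rfl

lemma v_zero (m n : ℤ) : v m n 0 = m := rfl

lemma v_one (m n : ℤ) : v m n 1 = n := rfl

lemma v_eq_iff {a b c d : ℤ} : a = c ∧ b = d ↔ v a b = v c d := by
  constructor
  · rintro ⟨rfl, rfl⟩; rfl
  · intro h; exact ⟨congrFun h 0, congrFun h 1⟩

lemma Sh_zero (x : A ℓ D) : Sh 0 x = x := by
  show (renameEquiv ℂ _) x = x
  have : ((Equiv.refl (Fin ℓ)).prodCongr (Equiv.addRight (0 : Fin D → ℤ))) = Equiv.refl _ := by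
    ext p <;> simp
  rw [this, renameEquiv_refl]; rfl

lemma Sh_ne_zero (M : Fin D → ℤ) {x : A ℓ D} (h : x ≠ 0) : Sh M x ≠ 0 := fun hc =>
  h (by simpa using (Sh M).injective (hc.trans (map_zero _).symm))

lemma B_zero_left (P : Fin ℓ → Fin ℓ → (Fin D → ℤ) → A ℓ D) (T : Fin D → ℤ) (g : A ℓ D) :
    B P T 0 g = 0 := by
  unfold B
  simp only [map_zero, mul_zero, finsum_zero]

lemma pderiv_uu (N : Fin 2 → ℤ) :
    pderiv ((0 : Fin 1), N) (uu 0 0) = if N = v 0 0 then 1 else 0 := by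
  unfold uu
  rcases eq_or_ne N (v 0 0) with h | h
  · simp [h]
  · rw [pderiv_X_of_ne (by simp [h.symm]), if_neg h]

lemma B_u (P : Fin 1 → Fin 1 → (Fin 2 → ℤ) → A 1 2) (T : Fin 2 → ℤ) (g : A 1 2) :
    B P T (uu 0 0) g
      = ∑ᶠ N : Fin 2 → ℤ, (pderiv ((0 : Fin 1), N) g) * Sh N (P 0 0 (T - N)) := by
  unfold B
  rw [finsum_unique, finsum_unique]
  simp only [Fin.default_eq_zero]
  rw [finsum_eq_single _ (v 0 0)]
  · apply finsum_congr; intro N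
    rw [pderiv_uu, if_pos rfl, map_one, mul_one, v00, add_zero]
  · intro M hM
    have : pderiv ((0 : Fin 1), M) (uu 0 0) = 0 := by rw [pderiv_uu, if_neg hM]
    simp only [this, map_zero, mul_zero, finsum_zero]

lemma B_u_u (P : Fin 1 → Fin 1 → (Fin 2 → ℤ) → A 1 2) (T : Fin 2 → ℤ) :
    B P T (uu 0 0) (uu 0 0) = P 0 0 T := by
  rw [B_u, finsum_eq_single _ (v 0 0)]
  · rw [pderiv_uu, if_pos rfl, one_mul, v00, sub_zero, Sh_zero]
  · intro N hN
    rw [pderiv_uu, if_neg hN, zero_mul]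

lemma B_u_zero (P : Fin 1 → Fin 1 → (Fin 2 → ℤ) → A 1 2) (T : Fin 2 → ℤ) :
    B P T (uu 0 0) 0 = 0 := by
  rw [B_u]
  simp only [map_zero, zero_mul, finsum_zero]

/-- From the Jacobi identity for `(u,u,u)`: if `P_W = 0` and `P_{T₀−W} = 0` then
`{u_λ P_{T₀}}` has vanishing `λ^W`-coefficient. -/
lemma key (P : Fin 1 → Fin 1 → (Fin 2 → ℤ) → A 1 2)
    (hJ : Jacobi P (uu 0 0) (uu 0 0) (uu 0 0)) (T₀ W : Fin 2 → ℤ)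
    (hW : P 0 0 W = 0) (hTW : P 0 0 (T₀ - W) = 0) :
    B P W (uu 0 0) (P 0 0 T₀) = 0 := by
  have h := hJ T₀ W
  rw [B_u_u, B_u_u, B_u_u, hW, hTW, B_u_zero, B_zero_left, zero_sub, neg_eq_zero] at h
  exact h

/-- The main extremal-direction bound: if `φ` is an additive functional, `K₀` a support point
with `φ K₀ = 2` and all other support points have `φ ≤ 1`, and the support lies in
`-2 ≤ φ ≤ 2`, then every variable `u_N` on which `P_{T₀}` depends satisfies
`φ N ≤ max 0 (φ T₀)`. -/
lemma main (P : Fin 1 → Fin 1 → (Fin 2 → ℤ) → A 1 2)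
    (hJ : Jacobi P (uu 0 0) (uu 0 0) (uu 0 0))
    (T₀ K₀ : Fin 2 → ℤ) (φ : (Fin 2 → ℤ) → ℤ)
    (hφs : ∀ X Y, φ (X - Y) = φ X - φ Y)
    (hφa : ∀ X Y, φ (X + Y) = φ X + φ Y)
    (hK₀2 : φ K₀ = 2)
    (hK₀ : P 0 0 K₀ ≠ 0)
    (hsmall : ∀ K, P 0 0 K ≠ 0 → K ≠ K₀ → φ K ≤ 1)
    (hbox : ∀ K, P 0 0 K ≠ 0 → -2 ≤ φ K ∧ φ K ≤ 2) :
    ∀ N₀, pderiv ((0 : Fin 1), N₀) (P 0 0 T₀) ≠ 0 → φ N₀ ≤ max 0 (φ T₀) := by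
  intro N₀ h0
  set F := P 0 0 T₀ with hF
  set V : Set (Fin 2 → ℤ) := {N | pderiv ((0 : Fin 1), N) F ≠ 0} with hV
  have hVfin : V.Finite := by
    apply Set.Finite.subset (Set.Finite.image Prod.snd F.vars.finite_toSet)
    intro N hN
    refine ⟨((0 : Fin 1), N), ?_, rfl⟩
    by_contra hv
    exact hN (pderiv_eq_zero_of_notMem_vars hv)
  have hVne : V.Nonempty := ⟨N₀, h0⟩
  obtain ⟨M, hM, hMmax⟩ := Set.Finite.exists_maximalFor φ V hVfin hVne
  have hmax : ∀ N ∈ V, φ N ≤ φ M := by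
    intro N hN
    by_contra hlt
    push_neg at hlt
    exact absurd (hMmax hN hlt.le) (not_le.mpr hlt)
  have hgoal : φ M ≤ max 0 (φ T₀) := by
    by_contra hgt
    push_neg at hgt
    have hgt0 : 0 < φ M := lt_of_le_of_lt (le_max_left _ _) hgt
    have hgtT : φ T₀ < φ M := lt_of_le_of_lt (le_max_right _ _) hgt
    set W := M + K₀ with hW
    have hφW : φ W = φ M + 2 := by rw [hW, hφa, hK₀2]
    have hPW : P 0 0 W = 0 := by
      by_contra h
      have := (hbox W h).2
      omega
    have hPTW : P 0 0 (T₀ - W) = 0 := by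
      by_contra h
      have h1 := (hbox _ h).1
      rw [hφs] at h1
      omega
    have hzero := key P hJ T₀ W hPW hPTW
    rw [B_u] at hzero
    rw [finsum_eq_single _ M] at hzero
    · have hWM : W - M = K₀ := by rw [hW]; abel
      rw [hWM] at hzero
      rcases mul_eq_zero.mp hzero with h | h
      · exact hM h
      · exact Sh_ne_zero M hK₀ h
    · intro N hN
      rcases eq_or_ne (P 0 0 (W - N)) 0 with hz | hz
      · rw [hz, map_zero, mul_zero]
      · have hKne : W - N ≠ K₀ := by
          intro he
          apply hN
          have : N = W - K₀ := by rw [← he]; abel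
          rw [this, hW]; abel
        have hle := hsmall _ hz hKne
        rw [hφs] at hle
        have hNV : N ∉ V := by
          intro hNv
          have := hmax N hNv
          omega
        have : pderiv ((0 : Fin 1), N) F = 0 := not_not.mp hNV
        rw [this, zero_mul]
  exact le_trans (hmax N₀ h0) hgoal

section P2Lemmas

variable (F11 F12 F22 G1 G2 : A 1 2)

lemma P2_eq_zero {K : Fin 2 → ℤ}
    (h1 : K ≠ v 2 0) (h2 : K ≠ v 1 1) (h3 : K ≠ v 0 2) (h4 : K ≠ v 1 0) (h5 : K ≠ v 0 1)
    (h6 : K ≠ v (-2) 0) (h7 : K ≠ v (-1) (-1)) (h8 : K ≠ v 0 (-2)) (h9 : K ≠ v (-1) 0)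
    (h10 : K ≠ v 0 (-1)) : P2 F11 F12 F22 G1 G2 0 0 K = 0 := by
  unfold P2
  rw [if_neg h1, if_neg h2, if_neg h3, if_neg h4, if_neg h5, if_neg h6, if_neg h7,
    if_neg h8, if_neg h9, if_neg h10]

lemma P2_cases {K : Fin 2 → ℤ} (h : P2 F11 F12 F22 G1 G2 0 0 K ≠ 0) :
    K = v 2 0 ∨ K = v 1 1 ∨ K = v 0 2 ∨ K = v 1 0 ∨ K = v 0 1 ∨
    K = v (-2) 0 ∨ K = v (-1) (-1) ∨ K = v 0 (-2) ∨ K = v (-1) 0 ∨ K = v 0 (-1) := by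
  by_contra hc
  push_neg at hc
  obtain ⟨h1, h2, h3, h4, h5, h6, h7, h8, h9, h10⟩ := hc
  exact h (P2_eq_zero F11 F12 F22 G1 G2 h1 h2 h3 h4 h5 h6 h7 h8 h9 h10)

lemma P2_20 : P2 F11 F12 F22 G1 G2 0 0 (v 2 0) = F11 := if_pos rfl

lemma P2_11 : P2 F11 F12 F22 G1 G2 0 0 (v 1 1) = F12 := by
  unfold P2; rw [if_neg (by rw [← v_eq_iff]; omega), if_pos rfl]

lemma P2_02 : P2 F11 F12 F22 G1 G2 0 0 (v 0 2) = F22 := by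
  unfold P2
  rw [if_neg (by rw [← v_eq_iff]; omega), if_neg (by rw [← v_eq_iff]; omega), if_pos rfl]

lemma P2_10 : P2 F11 F12 F22 G1 G2 0 0 (v 1 0) = G1 := by
  unfold P2
  rw [if_neg (by rw [← v_eq_iff]; omega), if_neg (by rw [← v_eq_iff]; omega),
    if_neg (by rw [← v_eq_iff]; omega), if_pos rfl]

lemma P2_01 : P2 F11 F12 F22 G1 G2 0 0 (v 0 1) = G2 := by
  unfold P2
  rw [if_neg (by rw [← v_eq_iff]; omega), if_neg (by rw [← v_eq_iff]; omega),
    if_neg (by rw [← v_eq_iff]; omega), if_neg (by rw [← v_eq_iff]; omega), if_pos rfl]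

lemma P2_m20 : P2 F11 F12 F22 G1 G2 0 0 (v (-2) 0) = -(Sh (v (-2) 0) F11) := by
  unfold P2
  rw [if_neg (by rw [← v_eq_iff]; omega), if_neg (by rw [← v_eq_iff]; omega),
    if_neg (by rw [← v_eq_iff]; omega), if_neg (by rw [← v_eq_iff]; omega),
    if_neg (by rw [← v_eq_iff]; omega), if_pos rfl]

lemma P2_0m2 : P2 F11 F12 F22 G1 G2 0 0 (v 0 (-2)) = -(Sh (v 0 (-2)) F22) := by
  unfold P2
  rw [if_neg (by rw [← v_eq_iff]; omega), if_neg (by rw [← v_eq_iff]; omega),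
    if_neg (by rw [← v_eq_iff]; omega), if_neg (by rw [← v_eq_iff]; omega),
    if_neg (by rw [← v_eq_iff]; omega), if_neg (by rw [← v_eq_iff]; omega),
    if_neg (by rw [← v_eq_iff]; omega), if_pos rfl]

end P2Lemmas

/-- if the λ-bracket of the `(−2,2)`-order operator satisfies the
PVA-Jacobi identity for `(u,u,u)`, then `F₁₁ = F₁₁(u,u_{10},u_{20})`,
`F₁₂ = F₁₂(u,u_{10},u_{01},u_{11})`, `F₂₂ = F₂₂(u,u_{01},u_{02})`, `G₁ = G₁(u,u_{10})`,
`G₂ = G₂(u,u_{01})`. -/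
theorem second_order_coefficient_dependence (F11 F12 F22 G1 G2 : A 1 2)
    (h11 : F11 ≠ 0) (h12 : F12 ≠ 0) (h22 : F22 ≠ 0) (hG1 : G1 ≠ 0) (hG2 : G2 ≠ 0)
    (hJ : Jacobi (P2 F11 F12 F22 G1 G2) (uu 0 0) (uu 0 0) (uu 0 0)) :
    (∀ m n : ℤ, (m, n) ∉ ({(0,0), (1,0), (2,0)} : Set (ℤ × ℤ)) →
      pderiv ((0 : Fin 1), v m n) F11 = 0) ∧
    (∀ m n : ℤ, (m, n) ∉ ({(0,0), (1,0), (0,1), (1,1)} : Set (ℤ × ℤ)) →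
      pderiv ((0 : Fin 1), v m n) F12 = 0) ∧
    (∀ m n : ℤ, (m, n) ∉ ({(0,0), (0,1), (0,2)} : Set (ℤ × ℤ)) →
      pderiv ((0 : Fin 1), v m n) F22 = 0) ∧
    (∀ m n : ℤ, (m, n) ∉ ({(0,0), (1,0)} : Set (ℤ × ℤ)) →
      pderiv ((0 : Fin 1), v m n) G1 = 0) ∧
    (∀ m n : ℤ, (m, n) ∉ ({(0,0), (0,1)} : Set (ℤ × ℤ)) →
      pderiv ((0 : Fin 1), v m n) G2 = 0) := by
  set P := P2 F11 F12 F22 G1 G2 with hP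
  -- support box and "all other support points are φ-small" facts
  have hb : ∀ K : Fin 2 → ℤ, P 0 0 K ≠ 0 →
      (-2 ≤ K 0 ∧ K 0 ≤ 2) ∧ (-2 ≤ K 1 ∧ K 1 ≤ 2) := by
    intro K h
    rcases P2_cases F11 F12 F22 G1 G2 h with h|h|h|h|h|h|h|h|h|h <;> subst h <;>
      simp only [v_zero, v_one] <;> omega
  have hs1 : ∀ K : Fin 2 → ℤ, P 0 0 K ≠ 0 → K ≠ v 2 0 → K 0 ≤ 1 := by
    intro K h hne
    rcases P2_cases F11 F12 F22 G1 G2 h with h|h|h|h|h|h|h|h|h|h <;> subst h <;>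
      first
        | exact absurd rfl hne
        | (simp only [v_zero]; omega)
  have hs2 : ∀ K : Fin 2 → ℤ, P 0 0 K ≠ 0 → K ≠ v (-2) 0 → -(K 0) ≤ 1 := by
    intro K h hne
    rcases P2_cases F11 F12 F22 G1 G2 h with h|h|h|h|h|h|h|h|h|h <;> subst h <;>
      first
        | exact absurd rfl hne
        | (simp only [v_zero]; omega)
  have hs3 : ∀ K : Fin 2 → ℤ, P 0 0 K ≠ 0 → K ≠ v 0 2 → K 1 ≤ 1 := by
    intro K h hne
    rcases P2_cases F11 F12 F22 G1 G2 h with h|h|h|h|h|h|h|h|h|h <;> subst h <;>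
      first
        | exact absurd rfl hne
        | (simp only [v_one]; omega)
  have hs4 : ∀ K : Fin 2 → ℤ, P 0 0 K ≠ 0 → K ≠ v 0 (-2) → -(K 1) ≤ 1 := by
    intro K h hne
    rcases P2_cases F11 F12 F22 G1 G2 h with h|h|h|h|h|h|h|h|h|h <;> subst h <;>
      first
        | exact absurd rfl hne
        | (simp only [v_one]; omega)
  have hK1 : P 0 0 (v 2 0) ≠ 0 := by rw [hP, P2_20]; exact h11
  have hK2 : P 0 0 (v (-2) 0) ≠ 0 := by
    rw [hP, P2_m20]; exact neg_ne_zero.mpr (Sh_ne_zero _ h11)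
  have hK3 : P 0 0 (v 0 2) ≠ 0 := by rw [hP, P2_02]; exact h22
  have hK4 : P 0 0 (v 0 (-2)) ≠ 0 := by
    rw [hP, P2_0m2]; exact neg_ne_zero.mpr (Sh_ne_zero _ h22)
  -- the four directional bounds
  have hb2 : ∀ K : Fin 2 → ℤ, P 0 0 K ≠ 0 → -2 ≤ -(K 0) ∧ -(K 0) ≤ 2 := by
    intro K h; have := (hb K h).1; omega
  have hb4 : ∀ K : Fin 2 → ℤ, P 0 0 K ≠ 0 → -2 ≤ -(K 1) ∧ -(K 1) ≤ 2 := by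
    intro K h; have := (hb K h).2; omega
  have D1 : ∀ T₀ N₀ : Fin 2 → ℤ, pderiv ((0 : Fin 1), N₀) (P 0 0 T₀) ≠ 0 →
      N₀ 0 ≤ max 0 (T₀ 0) := fun T₀ =>
    main P hJ T₀ (v 2 0) (fun N => N 0) (fun _ _ => rfl) (fun _ _ => rfl) rfl hK1 hs1
      (fun K h => (hb K h).1)
  have D2 : ∀ T₀ N₀ : Fin 2 → ℤ, pderiv ((0 : Fin 1), N₀) (P 0 0 T₀) ≠ 0 →
      -(N₀ 0) ≤ max 0 (-(T₀ 0)) := fun T₀ =>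
    main P hJ T₀ (v (-2) 0) (fun N => -(N 0))
      (fun X Y => by show -(X 0 - Y 0) = _; ring)
      (fun X Y => by show -(X 0 + Y 0) = _; ring)
      (by show -(-2 : ℤ) = 2; norm_num) hK2 hs2 hb2
  have D3 : ∀ T₀ N₀ : Fin 2 → ℤ, pderiv ((0 : Fin 1), N₀) (P 0 0 T₀) ≠ 0 →
      N₀ 1 ≤ max 0 (T₀ 1) := fun T₀ =>
    main P hJ T₀ (v 0 2) (fun N => N 1) (fun _ _ => rfl) (fun _ _ => rfl) rfl hK3 hs3
      (fun K h => (hb K h).2)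
  have D4 : ∀ T₀ N₀ : Fin 2 → ℤ, pderiv ((0 : Fin 1), N₀) (P 0 0 T₀) ≠ 0 →
      -(N₀ 1) ≤ max 0 (-(T₀ 1)) := fun T₀ =>
    main P hJ T₀ (v 0 (-2)) (fun N => -(N 1))
      (fun X Y => by show -(X 1 - Y 1) = _; ring)
      (fun X Y => by show -(X 1 + Y 1) = _; ring)
      (by show -(-2 : ℤ) = 2; norm_num) hK4 hs4 hb4
  refine ⟨?_, ?_, ?_, ?_, ?_⟩
  · -- F11, T₀ = v 2 0
    intro m n hmn
    by_contra hd
    rw [show F11 = P 0 0 (v 2 0) from (P2_20 F11 F12 F22 G1 G2).symm] at hd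
    have c1 := D1 _ _ hd
    have c2 := D2 _ _ hd
    have c3 := D3 _ _ hd
    have c4 := D4 _ _ hd
    simp only [v_zero, v_one] at c1 c2 c3 c4
    norm_num at c1 c2 c3 c4
    simp only [Set.mem_insert_iff, Set.mem_singleton_iff, Prod.mk.injEq] at hmn
    omega
  · -- F12, T₀ = v 1 1
    intro m n hmn
    by_contra hd
    rw [show F12 = P 0 0 (v 1 1) from (P2_11 F11 F12 F22 G1 G2).symm] at hd
    have c1 := D1 _ _ hd
    have c2 := D2 _ _ hd
    have c3 := D3 _ _ hd
    have c4 := D4 _ _ hd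
    simp only [v_zero, v_one] at c1 c2 c3 c4
    norm_num at c1 c2 c3 c4
    simp only [Set.mem_insert_iff, Set.mem_singleton_iff, Prod.mk.injEq] at hmn
    omega
  · -- F22, T₀ = v 0 2
    intro m n hmn
    by_contra hd
    rw [show F22 = P 0 0 (v 0 2) from (P2_02 F11 F12 F22 G1 G2).symm] at hd
    have c1 := D1 _ _ hd
    have c2 := D2 _ _ hd
    have c3 := D3 _ _ hd
    have c4 := D4 _ _ hd
    simp only [v_zero, v_one] at c1 c2 c3 c4
    norm_num at c1 c2 c3 c4
    simp only [Set.mem_insert_iff, Set.mem_singleton_iff, Prod.mk.injEq] at hmn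
    omega
  · -- G1, T₀ = v 1 0
    intro m n hmn
    by_contra hd
    rw [show G1 = P 0 0 (v 1 0) from (P2_10 F11 F12 F22 G1 G2).symm] at hd
    have c1 := D1 _ _ hd
    have c2 := D2 _ _ hd
    have c3 := D3 _ _ hd
    have c4 := D4 _ _ hd
    simp only [v_zero, v_one] at c1 c2 c3 c4
    norm_num at c1 c2 c3 c4
    simp only [Set.mem_insert_iff, Set.mem_singleton_iff, Prod.mk.injEq] at hmn
    omega
  · -- G2, T₀ = v 0 1
    intro m n hmn
    by_contra hd
    rw [show G2 = P 0 0 (v 0 1) from (P2_01 F11 F12 F22 G1 G2).symm] at hd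
    have c1 := D1 _ _ hd
    have c2 := D2 _ _ hd
    have c3 := D3 _ _ hd
    have c4 := D4 _ _ hd
    simp only [v_zero, v_one] at c1 c2 c3 c4
    norm_num at c1 c2 c3 c4
    simp only [Set.mem_insert_iff, Set.mem_singleton_iff, Prod.mk.injEq] at hmn
    omega

end MPVA
end
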